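/- Lemma 5 (allocation-level form): Z'_max = Z_max + |D|, and every feasible allocation π' of P' with Z(π') = Z'_max assigns all dummy jobs of D; moreover its real restriction is a feasible allocation of P with Z = Z_max whose sorted vector equals φ_f (i.e., the fairness vector realized by any maximum allocation of P' is exactly the max-lexmin fairness vector of P). -/

import Mathlib

/-- A feasible allocation: every assigned triple was bid on, every job is
assigned at most once, and capacities are respected. -/
def Feasible {J T K : Type*} [DecidableEq J] [DecidableEq T] [DecidableEq K]
    (b : J → T → K → Prop) (n : K → T → ℕ) (π : Finset (J × T × K)) : Prop :=
  (∀ x ∈ π, b x.1 x.2.1 x.2.2) ∧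
  (∀ j : J, (π.filter (fun x => x.1 = j)).card ≤ 1) ∧
  (∀ (k : K) (t : T), (π.filter (fun x => x.2.1 = t ∧ x.2.2 = k)).card ≤ n k t)

/-- Number of jobs a company `k` receives in allocation `π`. -/
def alloc {J T K : Type*} [DecidableEq K]
    (π : Finset (J × T × K)) (k : K) : ℕ :=
  (π.filter (fun x => x.2.2 = k)).card

/-- Total compensation of an allocation. -/
def cost {J T K : Type*} (c : J → T → K → ℕ) (π : Finset (J × T × K)) : ℕ :=
  ∑ x ∈ π, c x.1 x.2.1 x.2.2

/-- The maximum number of allocatable jobs. -/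
noncomputable def Zmax {J T K : Type*} [DecidableEq J] [DecidableEq T] [DecidableEq K]
    (b : J → T → K → Prop) (n : K → T → ℕ) : ℕ :=
  sSup {z | ∃ π : Finset (J × T × K), Feasible b n π ∧ π.card = z}

/-- The allocation vector of `π` sorted in nondecreasing order. -/
def sortedVec {J T K : Type*} [Fintype K] [DecidableEq K]
    (π : Finset (J × T × K)) : List ℕ :=
  Multiset.sort (Finset.univ.val.map (fun k => alloc π k)) (· ≤ ·)

/-- `π` is a max-lexmin fair maximum allocation. -/
noncomputable def MaxLexminFair {J T K : Type*} [Fintype K]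
    [DecidableEq J] [DecidableEq T] [DecidableEq K]
    (b : J → T → K → Prop) (n : K → T → ℕ) (π : Finset (J × T × K)) : Prop :=
  Feasible b n π ∧ π.card = Zmax b n ∧
    ∀ π' : Finset (J × T × K), Feasible b n π' → π'.card = Zmax b n →
      sortedVec π' = sortedVec π ∨ List.Lex (· < ·) (sortedVec π') (sortedVec π)


/-! ## The dummy-augmented instance `P'` of Section 3.2.

Given the max-lexmin fair sorted vector `φf = (φ_1 ≤ … ≤ φ_|K|)` of `P`,
we add `L = φ_|K| - φ_1` dummy layers; layer `l` (`0`-indexed) carries one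
dummy time and `#{i : φ_i < φ_1 + l + 1}` dummy jobs of cost `0` that every
company bids on with capacity `1` per dummy time.  In `P'` each company may
receive at most `φ_|K|` jobs in total. -/

/-- Number `L` of dummy layers: largest minus smallest entry of `φf`. -/
def Ldim (φf : List ℕ) : ℕ := φf.getLast! - φf.head!

/-- Number of dummy jobs in (0-indexed) layer `l`: the number of entries of
`φf` smaller than `φ_1 + (l + 1)`. -/
def layerSize (φf : List ℕ) (l : ℕ) : ℕ :=
  (φf.filter (fun x => x < φf.head! + l + 1)).length

/-- The finite type of dummy jobs: layer `l` carries `layerSize φf l` jobs. -/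
abbrev Dummy (φf : List ℕ) : Type := (l : Fin (Ldim φf)) × Fin (layerSize φf l)

/-- Bids of `P'`: the original bids on real jobs at real times, plus a bid of
every company on every dummy job of layer `l` at the dummy time of layer `l`. -/
def bidAug {J T K : Type*} (b : J → T → K → Prop) (φf : List ℕ) :
    (J ⊕ Dummy φf) → (T ⊕ Fin (Ldim φf)) → K → Prop
  | Sum.inl j, Sum.inl t, k => b j t k
  | Sum.inr d, Sum.inr l, _ => d.1 = l
  | _, _, _ => False

/-- Costs of `P'`: original costs on real triples, `0` on dummy triples. -/
def costAug {J T K : Type*} (c : J → T → K → ℕ) (φf : List ℕ) :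
    (J ⊕ Dummy φf) → (T ⊕ Fin (Ldim φf)) → K → ℕ
  | Sum.inl j, Sum.inl t, k => c j t k
  | _, _, _ => 0

/-- Capacities of `P'`: original capacities at real times, capacity `1` for
every company at every dummy time. -/
def capAug {T K : Type*} (n : K → T → ℕ) (φf : List ℕ) :
    K → (T ⊕ Fin (Ldim φf)) → ℕ :=
  fun k t => match t with
  | Sum.inl t => n k t
  | Sum.inr _ => 1

/-- Feasibility for `P'`: feasibility for the augmented bids and capacities,
together with the requirement that each company receives at most `φ_|K|`
(the largest entry of `φf`) jobs in total. -/
def FeasibleAug {J T K : Type*} [DecidableEq J] [DecidableEq T] [DecidableEq K]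
    (b : J → T → K → Prop) (n : K → T → ℕ) (φf : List ℕ)
    (π' : Finset ((J ⊕ Dummy φf) × (T ⊕ Fin (Ldim φf)) × K)) : Prop :=
  Feasible (bidAug b φf) (capAug n φf) π' ∧ ∀ k : K, alloc π' k ≤ φf.getLast!

/-- The maximum number of allocatable jobs in `P'`. -/
noncomputable def ZmaxAug {J T K : Type*} [DecidableEq J] [DecidableEq T] [DecidableEq K]
    (b : J → T → K → Prop) (n : K → T → ℕ) (φf : List ℕ) : ℕ :=
  sSup {z | ∃ π' : Finset ((J ⊕ Dummy φf) × (T ⊕ Fin (Ldim φf)) × K),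
    FeasibleAug b n φf π' ∧ π'.card = z}

/-- Real restriction of an allocation of `P'`: the triples whose job lies in
`J` (feasibility forces their time to lie in `T`), viewed in `J × T × K`. -/
def restrict {J T K D T' : Type*} [DecidableEq J] [DecidableEq T] [DecidableEq K]
    (π' : Finset ((J ⊕ D) × (T ⊕ T') × K)) : Finset (J × T × K) :=
  π'.filterMap
    (fun x => match x with
      | (Sum.inl j, Sum.inl t, k) => some (j, t, k)
      | _ => none)
    (by rintro ⟨j₁ | d₁, t₁ | l₁, k₁⟩ ⟨j₂ | d₂, t₂ | l₂, k₂⟩ x h₁ h₂ <;>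
          simp_all <;> subst h₁ <;> simp_all)

/-- The embedding of real triples into the triples of `P'`. -/
def embTriple {J T K D T' : Type*} (x : J × T × K) : (J ⊕ D) × (T ⊕ T') × K :=
  (Sum.inl x.1, Sum.inl x.2.1, x.2.2)



section Helpers
open Finset

lemma sorted_head!_le {l : List ℕ} (hs : l.Pairwise (· ≤ ·)) {x : ℕ} (hx : x ∈ l) :
    l.head! ≤ x := by
  cases l with
  | nil => simp at hx
  | cons a t =>
    rcases List.mem_cons.mp hx with rfl | hx
    · simp
    · simpa using (List.rel_of_pairwise_cons hs hx)

lemma le_sorted_getLast! {l : List ℕ} (hs : l.Pairwise (· ≤ ·)) :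
    ∀ x ∈ l, x ≤ l.getLast! := by
  induction l with
  | nil => simp
  | cons a t ih =>
    intro x hx
    cases t with
    | nil =>
      simp only [List.mem_singleton] at hx
      simp [hx, List.getLast!]
    | cons b t' =>
      have hgl : (a :: b :: t').getLast! = (b :: t').getLast! := rfl
      rw [hgl]
      rcases List.mem_cons.mp hx with rfl | hx
      · exact le_trans (List.rel_of_pairwise_cons hs (a' := b) (by simp))
          (ih hs.of_cons b (by simp))
      · exact ih hs.of_cons x hx

lemma head!_mem {l : List ℕ} (h : l ≠ []) : l.head! ∈ l := by
  cases l with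
  | nil => simp at h
  | cons a t => simp

lemma getLast!_mem {l : List ℕ} (h : l ≠ []) : l.getLast! ∈ l := by
  have : l.getLast! = l.getLast h :=
    List.getLast!_of_getLast? (List.getLast?_eq_getLast h)
  rw [this]; exact List.getLast_mem h

lemma lex_of_tsub_sums : ∀ (A B : List ℕ), A.Pairwise (· ≤ ·) → A.length = B.length →
    (∀ v ∈ A, (B.map (v - ·)).sum ≤ (A.map (v - ·)).sum) →
    A = B ∨ List.Lex (· < ·) A B := by
  intro A
  induction A with
  | nil => intro B _ hlen _; left; exact (List.length_eq_zero_iff.mp hlen.symm).symm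
  | cons a A' ih =>
    intro B hs hlen hv
    cases B with
    | nil => simp at hlen
    | cons b B' =>
      have h0 : ((b :: B').map (a - ·)).sum ≤ ((a :: A').map (a - ·)).sum := hv a (by simp)
      have hA0 : ((a :: A').map (a - ·)).sum = 0 := by
        apply List.sum_eq_zero
        intro x hx
        simp only [List.mem_map] at hx
        obtain ⟨y, hy, rfl⟩ := hx
        have : a ≤ y := sorted_head!_le hs hy
        omega
      rw [hA0, Nat.le_zero] at h0
      have hab : a ≤ b := by
        have : a - b = 0 := by
          have := List.sum_eq_zero_iff.mp h0 (a - b) (by simp)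
          exact this
        omega
      rcases lt_or_eq_of_le hab with hlt | rfl
      · right; exact List.Lex.rel hlt
      · have htail : A' = B' ∨ List.Lex (· < ·) A' B' := by
          apply ih B' hs.of_cons (by simpa using hlen)
          intro v hvmem
          have := hv v (by simp [hvmem])
          simp only [List.map_cons, List.sum_cons] at this
          omega
        rcases htail with rfl | hlex
        · left; rfl
        · right; exact List.Lex.cons hlex

lemma sum_tsub_eq_sum_layers (p v : ℕ) (hpv : p ≤ v) :
    ∀ (A : List ℕ), (∀ x ∈ A, p ≤ x) →
    (A.map (v - ·)).sum =
      ∑ l ∈ Finset.range (v - p), (A.filter (fun x => x < p + l + 1)).length := by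
  intro A
  induction A with
  | nil => simp
  | cons a A' ih =>
    intro hA
    have hpa : p ≤ a := hA a (by simp)
    have hfil : ∀ l, ((a :: A').filter (fun x => x < p + l + 1)).length
        = (if a < p + l + 1 then 1 else 0) + (A'.filter (fun x => x < p + l + 1)).length := by
      intro l
      by_cases h : a ≤ p + l <;> simp [List.filter_cons, h] <;> omega
    simp only [List.map_cons, List.sum_cons, hfil]
    rw [Finset.sum_add_distrib, ← ih (fun x hx => hA x (by simp [hx]))]
    have hcount : ∑ l ∈ Finset.range (v - p), (if a < p + l + 1 then 1 else 0) = v - a := by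
      rw [Finset.sum_boole]
      have : (Finset.range (v - p)).filter (fun l => a < p + l + 1) = Finset.Ico (a - p) (v - p) := by
        ext l
        simp only [Finset.mem_filter, Finset.mem_range, Finset.mem_Ico]
        omega
      rw [this, Nat.card_Ico]; simp only [Nat.cast_id]
      omega
    omega

section SV
variable {J T K : Type*} [DecidableEq J] [DecidableEq T] [DecidableEq K] [Fintype K]

lemma card_eq_sum_alloc (π : Finset (J × T × K)) :
    π.card = ∑ k, alloc π k :=
  Finset.card_eq_sum_card_fiberwise (fun x _ => Finset.mem_univ x.2.2)

lemma sortedVec_map_sum (π : Finset (J × T × K)) (f : ℕ → ℕ) :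
    ((sortedVec π).map f).sum = ∑ k, f (alloc π k) := by
  have h : ((sortedVec π : List ℕ) : Multiset ℕ) = Finset.univ.val.map (alloc π) :=
    Multiset.sort_eq _ _
  calc ((sortedVec π).map f).sum
      = (Multiset.map f ((sortedVec π : List ℕ) : Multiset ℕ)).sum := by
        rw [Multiset.map_coe, Multiset.sum_coe]
    _ = ∑ k, f (alloc π k) := by rw [h, Multiset.map_map]; rfl

lemma mem_sortedVec {π : Finset (J × T × K)} {x : ℕ} :
    x ∈ sortedVec π ↔ ∃ k, alloc π k = x := by
  simp [sortedVec, Multiset.mem_sort]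

lemma sortedVec_sorted (π : Finset (J × T × K)) : (sortedVec π).Pairwise (· ≤ ·) :=
  Multiset.pairwise_sort _ _

lemma sortedVec_length (π : Finset (J × T × K)) :
    (sortedVec π).length = Fintype.card K := by
  simp [sortedVec]

lemma sortedVec_sum (π : Finset (J × T × K)) : (sortedVec π).sum = π.card := by
  have := sortedVec_map_sum π id
  simpa [card_eq_sum_alloc π] using this

lemma sortedVec_filter_length (π : Finset (J × T × K)) (p : ℕ → Prop) [DecidablePred p] :
    ((sortedVec π).filter (fun x => p x)).length
      = (Finset.univ.filter (fun k => p (alloc π k))).card := by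
  have h : ((sortedVec π : List ℕ) : Multiset ℕ) = Finset.univ.val.map (alloc π) :=
    Multiset.sort_eq _ _
  calc ((sortedVec π).filter (fun x => p x)).length
      = Multiset.card (Multiset.filter p ((sortedVec π : List ℕ) : Multiset ℕ)) := by
        rw [Multiset.filter_coe, Multiset.coe_card]
    _ = (Finset.univ.filter (fun k => p (alloc π k))).card := by
        rw [h, Multiset.filter_map, Multiset.card_map]; rfl

end SV

section Restrict
variable {J T K D T' : Type*} [DecidableEq J] [DecidableEq T] [DecidableEq K]

lemma mem_restrict {π' : Finset ((J ⊕ D) × (T ⊕ T') × K)} {j : J} {t : T} {k : K} :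
    (j, t, k) ∈ _root_.restrict π' ↔ (Sum.inl j, Sum.inl t, k) ∈ π' := by
  simp only [_root_.restrict, Finset.mem_filterMap]
  constructor
  · rintro ⟨⟨j'|d, t'|l, k'⟩, hx, h⟩ <;> simp_all
  · exact fun h => ⟨_, h, rfl⟩

lemma embTriple_injective :
    Function.Injective (embTriple (J:=J) (T:=T) (K:=K) (D:=D) (T':=T')) := by
  rintro ⟨j,t,k⟩ ⟨j',t',k'⟩ h
  simpa [embTriple, Prod.ext_iff] using h

end Restrict

section RestrictAug
variable {J T K : Type*} [DecidableEq J] [DecidableEq T] [DecidableEq K]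
  {b : J → T → K → Prop} {n : K → T → ℕ} {φf : List ℕ}
  {π' : Finset ((J ⊕ Dummy φf) × (T ⊕ Fin (Ldim φf)) × K)}

lemma restrict_filter_card (hb : ∀ x ∈ π', bidAug b φf x.1 x.2.1 x.2.2)
    (p : K → Prop) [DecidablePred p] :
    ((_root_.restrict π').filter (fun x => p x.2.2)).card
      = (π'.filter (fun x => x.1.isLeft ∧ p x.2.2)).card := by
  apply Finset.card_nbij (i := embTriple)
  · rintro ⟨j,t,k⟩ hx
    rw [Finset.mem_coe, Finset.mem_filter] at hx ⊢
    exact ⟨mem_restrict.mp hx.1, rfl, hx.2⟩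
  · intro x _ y _ h
    exact embTriple_injective h
  · rintro ⟨j'|d, time, k⟩ hx <;>
      simp only [Finset.coe_filter, Set.mem_setOf_eq, Finset.mem_filter] at hx
    · rcases hx with ⟨hx1, -, hp⟩
      cases time with
      | inl t =>
        refine ⟨(j', t, k), ?_, rfl⟩
        simp only [Finset.coe_filter, Set.mem_setOf_eq]
        exact ⟨mem_restrict.mpr hx1, hp⟩
      | inr l => exact absurd (hb _ hx1) (by simp [bidAug])
    · exact absurd hx.2.1 (by simp)

lemma restrict_feasible (hf : Feasible (bidAug b φf) (capAug n φf) π') :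
    Feasible b n (_root_.restrict π') := by
  obtain ⟨hb, hj, hc⟩ := hf
  refine ⟨?_, ?_, ?_⟩
  · rintro ⟨j,t,k⟩ hx
    exact hb _ (mem_restrict.mp hx)
  · intro j
    calc ((_root_.restrict π').filter (fun x => x.1 = j)).card
        ≤ (π'.filter (fun x => x.1 = Sum.inl j)).card := by
          apply Finset.card_le_card_of_injOn embTriple
          · rintro ⟨j',t,k⟩ hx
            rw [Finset.mem_coe, Finset.mem_filter] at hx ⊢
            obtain ⟨h1, rfl⟩ := hx
            exact ⟨mem_restrict.mp h1, rfl⟩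
          · intro x _ y _ h; exact embTriple_injective h
      _ ≤ 1 := hj (Sum.inl j)
  · intro k t
    calc ((_root_.restrict π').filter (fun x => x.2.1 = t ∧ x.2.2 = k)).card
        ≤ (π'.filter (fun x => x.2.1 = Sum.inl t ∧ x.2.2 = k)).card := by
          apply Finset.card_le_card_of_injOn embTriple
          · rintro ⟨j',t',k'⟩ hx
            rw [Finset.mem_coe, Finset.mem_filter] at hx ⊢
            obtain ⟨h1, rfl, rfl⟩ := hx
            exact ⟨mem_restrict.mp h1, rfl, rfl⟩
          · intro x _ y _ h; exact embTriple_injective h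
      _ ≤ n k t := hc k (Sum.inl t)

lemma card_split (hb : ∀ x ∈ π', bidAug b φf x.1 x.2.1 x.2.2) :
    π'.card = (_root_.restrict π').card
      + (π'.filter (fun x => ¬ (x.1.isLeft : Prop))).card := by
  have h1 := restrict_filter_card hb (fun _ => True)
  simp only [Finset.filter_true, and_true] at h1
  rw [h1, Finset.card_filter_add_card_filter_not]

lemma alloc_restrict_eq (hb : ∀ x ∈ π', bidAug b φf x.1 x.2.1 x.2.2) (k : K) :
    alloc (_root_.restrict π') k
      = (π'.filter (fun x => (x.1.isLeft : Prop) ∧ x.2.2 = k)).card :=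
  restrict_filter_card hb (fun k' => k' = k)

lemma alloc_split (hb : ∀ x ∈ π', bidAug b φf x.1 x.2.1 x.2.2) (k : K) :
    alloc π' k = alloc (_root_.restrict π') k
      + (π'.filter (fun x => x.2.2 = k ∧ ¬ (x.1.isLeft : Prop))).card := by
  have h2 := Finset.card_filter_add_card_filter_not
    (s := π'.filter (fun x => x.2.2 = k)) (p := fun x => (x.1.isLeft : Prop))
  rw [Finset.filter_filter, Finset.filter_filter] at h2
  have h3 : π'.filter (fun x => x.2.2 = k ∧ (x.1.isLeft : Prop))
      = π'.filter (fun x => (x.1.isLeft : Prop) ∧ x.2.2 = k) := by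
    apply Finset.filter_congr; intro x _; constructor
    · exact fun h => ⟨h.2, h.1⟩
    · exact fun h => ⟨h.2, h.1⟩
  rw [alloc, ← h2, h3, ← alloc_restrict_eq hb k]

lemma dummy_count :
    (π'.filter (fun x => ¬ (x.1.isLeft : Prop))).card
      = ∑ d : Dummy φf, (π'.filter (fun x => x.1 = Sum.inr d)).card := by
  rw [Finset.card_eq_sum_card_fiberwise (f := fun x => x.1)
      (t := Finset.univ.image Sum.inr) (fun x hx => by
        rw [Finset.mem_coe, Finset.mem_filter] at hx
        rcases hx with ⟨-, h⟩
        match hx1 : x.1 with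
        | Sum.inl j => exact absurd (by rw [hx1]; simp) h
        | Sum.inr d => show x.1 ∈ _; rw [hx1]; simp)]
  rw [Finset.sum_image (by intro x _ y _ h; exact Sum.inr.inj h)]
  apply Finset.sum_congr rfl
  intro d _
  congr 1
  rw [Finset.filter_filter]
  apply Finset.filter_congr
  intro x _
  constructor
  · exact fun h => h.2
  · exact fun h => ⟨by simp [h], h⟩

end RestrictAug

section Construction
variable {J T K : Type*} [DecidableEq J] [DecidableEq T] [DecidableEq K]
  [Fintype K] [Nonempty K]
  {b : J → T → K → Prop} {n : K → T → ℕ} {φf : List ℕ}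

lemma exists_aug_allocation {π₀ : Finset (J × T × K)} (hfeas₀ : Feasible b n π₀)
    (hsv : sortedVec π₀ = φf) :
    ∃ π'' : Finset ((J ⊕ Dummy φf) × (T ⊕ Fin (Ldim φf)) × K),
      FeasibleAug b n φf π'' ∧ π''.card = π₀.card + Fintype.card (Dummy φf) := by
  classical
  obtain ⟨hb₀, hj₀, hc₀⟩ := hfeas₀
  set φ1 := φf.head! with hφ1
  set φm := φf.getLast! with hφm
  have hφs : φf.Pairwise (· ≤ ·) := hsv ▸ sortedVec_sorted π₀
  have hamem : ∀ k, alloc π₀ k ∈ φf := fun k => hsv ▸ mem_sortedVec.mpr ⟨k, rfl⟩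
  have ha1 : ∀ k, φ1 ≤ alloc π₀ k := fun k => sorted_head!_le hφs (hamem k)
  have ham : ∀ k, alloc π₀ k ≤ φm := fun k => le_sorted_getLast! hφs _ (hamem k)
  have hφ1m : φ1 ≤ φm := le_trans (ha1 (Classical.arbitrary K)) (ham _)
  set S : Fin (Ldim φf) → Finset K :=
    fun l => Finset.univ.filter (fun k => alloc π₀ k < φf.head! + l + 1) with hSdef
  have hScard : ∀ l, (S l).card = layerSize φf l := by
    intro l
    show _ = (φf.filter (fun x => x < φf.head! + (l : ℕ) + 1)).length
    have h2 := sortedVec_filter_length π₀ (fun x => x < φf.head! + (l : ℕ) + 1)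
    rw [hsv] at h2
    exact h2.symm
  set e : Dummy φf → K :=
    fun d => ((S d.1).equivFin.symm (Fin.cast (hScard d.1).symm d.2) : K) with hedef
  have heS : ∀ d, e d ∈ S d.1 := fun d => ((S d.1).equivFin.symm _).2
  have heinj : ∀ d d' : Dummy φf, d.1 = d'.1 → e d = e d' → d = d' := by
    rintro ⟨l, i⟩ ⟨l', i'⟩ h1 h2
    subst h1
    simp only [hedef] at h2
    have := (S l).equivFin.symm.injective (Subtype.ext h2)
    have : (Fin.cast (hScard l).symm i) = (Fin.cast (hScard l).symm i') := this
    have hii : i = i' := Fin.ext (by simpa using congrArg Fin.val this)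
    exact congrArg (fun z => (⟨l, z⟩ : Dummy φf)) hii
  set F : Dummy φf → (J ⊕ Dummy φf) × (T ⊕ Fin (Ldim φf)) × K :=
    fun d => (Sum.inr d, Sum.inr d.1, e d) with hFdef
  have hFinj : Function.Injective F := by
    intro d d' h
    have := congrArg (fun x => x.1) h
    simpa [hFdef] using this
  set realPart := π₀.image (embTriple (D := Dummy φf) (T' := Fin (Ldim φf))) with hrp
  set dummyPart := Finset.univ.image F with hdp
  set π'' := realPart ∪ dummyPart with hπ''
  have hdisj : Disjoint realPart dummyPart := by
    rw [Finset.disjoint_left]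
    rintro x hx hx'
    simp only [hrp, hdp, Finset.mem_image, Finset.mem_univ, true_and] at hx hx'
    obtain ⟨y, -, rfl⟩ := hx
    obtain ⟨d, hd⟩ := hx'
    simp [hFdef, embTriple, Prod.ext_iff] at hd
  have hmem'' : ∀ x, x ∈ π'' ↔ ((∃ y ∈ π₀, embTriple y = x) ∨ ∃ d, F d = x) := by
    intro x
    simp [hπ'', hrp, hdp, Finset.mem_union, Finset.mem_image]
  refine ⟨π'', ⟨⟨?_, ?_, ?_⟩, ?_⟩, ?_⟩
  · -- bids
    intro x hx
    rcases (hmem'' x).mp hx with ⟨y, hy, rfl⟩ | ⟨d, rfl⟩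
    · exact hb₀ y hy
    · simp [hFdef, bidAug]
  · -- job uniqueness
    intro j
    rw [Finset.card_le_one]
    intro x hx y hy
    rw [Finset.mem_filter] at hx hy
    cases j with
    | inl j₀ =>
      obtain ⟨x₀, hx₀, rfl⟩ : ∃ y ∈ π₀, embTriple y = x := by
        rcases (hmem'' x).mp hx.1 with h | ⟨d, rfl⟩
        · exact h
        · exact absurd hx.2 (by simp [hFdef, embTriple])
      obtain ⟨y₀, hy₀, rfl⟩ : ∃ y' ∈ π₀, embTriple y' = y := by
        rcases (hmem'' y).mp hy.1 with h | ⟨d, rfl⟩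
        · exact h
        · exact absurd hy.2 (by simp [hFdef, embTriple])
      have hx1 : x₀.1 = j₀ := by
        have := hx.2; simpa [embTriple] using this
      have hy1 : y₀.1 = j₀ := by
        have := hy.2; simpa [embTriple] using this
      have : x₀ = y₀ := by
        have h1 := hj₀ j₀
        rw [Finset.card_le_one] at h1
        exact h1 x₀ (Finset.mem_filter.mpr ⟨hx₀, hx1⟩) y₀ (Finset.mem_filter.mpr ⟨hy₀, hy1⟩)
      rw [this]
    | inr d =>
      obtain ⟨d₁, rfl⟩ : ∃ d', F d' = x := by
        rcases (hmem'' x).mp hx.1 with ⟨y', -, rfl⟩ | h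
        · exact absurd hx.2 (by simp [embTriple])
        · exact h
      obtain ⟨d₂, rfl⟩ : ∃ d', F d' = y := by
        rcases (hmem'' y).mp hy.1 with ⟨y', -, rfl⟩ | h
        · exact absurd hy.2 (by simp [embTriple])
        · exact h
      have h1 : d₁ = d := by have := hx.2; simpa [hFdef] using this
      have h2 : d₂ = d := by have := hy.2; simpa [hFdef] using this
      rw [h1, h2]
  · -- capacities
    intro k t
    cases t with
    | inl t₀ =>
      have hsplit : π''.filter (fun x => x.2.1 = Sum.inl t₀ ∧ x.2.2 = k)
          = (π₀.filter (fun x => x.2.1 = t₀ ∧ x.2.2 = k)).image embTriple := by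
        ext x
        simp only [Finset.mem_filter, Finset.mem_image]
        constructor
        · rintro ⟨hx, ht, hk⟩
          rcases (hmem'' x).mp hx with ⟨y, hy, rfl⟩ | ⟨d, rfl⟩
          · refine ⟨y, ⟨hy, ?_, ?_⟩, rfl⟩
            · simpa [embTriple] using ht
            · simpa [embTriple] using hk
          · exact absurd ht (by simp [hFdef])
        · rintro ⟨y, hy, rfl⟩
          exact ⟨(hmem'' _).mpr (Or.inl ⟨y, hy.1, rfl⟩),
            by simp [embTriple, hy.2.1], by simp [embTriple, hy.2.2]⟩
      rw [hsplit, Finset.card_image_of_injective _ embTriple_injective]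
      exact hc₀ k t₀
    | inr l =>
      show _ ≤ 1
      rw [Finset.card_le_one]
      intro x hx y hy
      rw [Finset.mem_filter] at hx hy
      obtain ⟨d₁, rfl⟩ : ∃ d', F d' = x := by
        rcases (hmem'' x).mp hx.1 with ⟨y', -, rfl⟩ | h
        · exact absurd hx.2.1 (by simp [embTriple])
        · exact h
      obtain ⟨d₂, rfl⟩ : ∃ d', F d' = y := by
        rcases (hmem'' y).mp hy.1 with ⟨y', -, rfl⟩ | h
        · exact absurd hy.2.1 (by simp [embTriple])
        · exact h
      have hl1 : d₁.1 = l := by have := hx.2.1; simpa [hFdef] using this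
      have hl2 : d₂.1 = l := by have := hy.2.1; simpa [hFdef] using this
      have hk12 : e d₁ = e d₂ := by
        have h1 : e d₁ = k := by have := hx.2.2; simpa [hFdef] using this
        have h2 : e d₂ = k := by have := hy.2.2; simpa [hFdef] using this
        rw [h1, h2]
      rw [heinj d₁ d₂ (hl1.trans hl2.symm) hk12]
  · -- global cap
    intro k
    have hsplit : π''.filter (fun x => x.2.2 = k)
        = (π₀.filter (fun x => x.2.2 = k)).image embTriple
          ∪ (Finset.univ.filter (fun d => e d = k)).image F := by
      ext x
      simp only [Finset.mem_filter, Finset.mem_union, Finset.mem_image, Finset.mem_univ, true_and]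
      constructor
      · rintro ⟨hx, hk⟩
        rcases (hmem'' x).mp hx with ⟨y, hy, rfl⟩ | ⟨d, rfl⟩
        · exact Or.inl ⟨y, ⟨hy, by simpa [embTriple] using hk⟩, rfl⟩
        · exact Or.inr ⟨d, by simpa [hFdef] using hk, rfl⟩
      · rintro (⟨y, hy, rfl⟩ | ⟨d, hd, rfl⟩)
        · exact ⟨(hmem'' _).mpr (Or.inl ⟨y, hy.1, rfl⟩), by simp [embTriple, hy.2]⟩
        · exact ⟨(hmem'' _).mpr (Or.inr ⟨d, rfl⟩), by simp [hFdef, hd]⟩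
    have hdisj2 : Disjoint ((π₀.filter (fun x => x.2.2 = k)).image embTriple)
        ((Finset.univ.filter (fun d => e d = k)).image F) := by
      rw [Finset.disjoint_left]
      rintro x hx hx'
      simp only [Finset.mem_image] at hx hx'
      obtain ⟨y, -, rfl⟩ := hx
      obtain ⟨d, -, hd⟩ := hx'
      simp [hFdef, embTriple, Prod.ext_iff] at hd
    have hcard2 : (Finset.univ.filter (fun d : Dummy φf => e d = k)).card
        = Ldim φf - (alloc π₀ k - φ1) := by
      rw [Finset.card_eq_sum_card_fiberwise
        (f := fun d : Dummy φf => d.1) (t := Finset.univ) (fun x _ => Finset.mem_univ _)]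
      have hfib : ∀ l : Fin (Ldim φf),
          ((Finset.univ.filter (fun d : Dummy φf => e d = k)).filter
            (fun d => d.1 = l)).card = if k ∈ S l then 1 else 0 := by
        intro l
        split_ifs with hk
        · rw [Finset.card_eq_one]
          refine ⟨⟨l, Fin.cast (hScard l) ((S l).equivFin ⟨k, hk⟩)⟩, ?_⟩
          rw [Finset.eq_singleton_iff_unique_mem]
          constructor
          · simp only [Finset.mem_filter, Finset.mem_univ, true_and]
            constructor
            · show e _ = k
              simp only [hedef]
              have : (Fin.cast (hScard l).symm (Fin.cast (hScard l) ((S l).equivFin ⟨k, hk⟩)))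
                  = (S l).equivFin ⟨k, hk⟩ := by ext; simp
              rw [this, Equiv.symm_apply_apply]
            · trivial
          · rintro d hd
            simp only [Finset.mem_filter, Finset.mem_univ, true_and] at hd
            apply heinj _ _ (by simpa using hd.2)
            show e d = e _
            rw [hd.1]
            simp only [hedef]
            have : (Fin.cast (hScard l).symm (Fin.cast (hScard l) ((S l).equivFin ⟨k, hk⟩)))
                = (S l).equivFin ⟨k, hk⟩ := by ext; simp
            rw [this, Equiv.symm_apply_apply]
        · rw [Finset.card_eq_zero, Finset.eq_empty_iff_forall_notMem]
          rintro d hd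
          simp only [Finset.mem_filter, Finset.mem_univ, true_and] at hd
          exact hk (hd.2 ▸ hd.1 ▸ heS d)
      rw [Finset.sum_congr rfl (fun l _ => hfib l), Finset.sum_boole, Nat.cast_id]
      have h3 : (Finset.univ.filter (fun l : Fin (Ldim φf) => k ∈ S l)).card
          = (Finset.Ico (alloc π₀ k - φ1) (Ldim φf)).card := by
        apply Finset.card_nbij (i := Fin.val)
        · intro l hl
          simp only [hSdef, Finset.mem_coe, Finset.mem_filter, Finset.mem_univ, true_and] at hl
          rw [Finset.mem_coe, Finset.mem_Ico]
          have := ha1 k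
          exact ⟨by omega, l.isLt⟩
        · exact Function.Injective.injOn Fin.val_injective
        · intro m hm
          rw [Finset.coe_Ico, Set.mem_Ico] at hm
          have hk' : k ∈ S ⟨m, hm.2⟩ := by
            simp only [hSdef, Finset.mem_filter, Finset.mem_univ, true_and]
            have := ha1 k
            omega
          exact ⟨⟨m, hm.2⟩, by
            simp only [Finset.coe_filter, Set.mem_setOf_eq, Finset.mem_univ, true_and]
            exact hk', rfl⟩
      rw [h3, Nat.card_Ico]
    show alloc π'' k ≤ φf.getLast!
    rw [alloc, hsplit, Finset.card_union_of_disjoint hdisj2,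
      Finset.card_image_of_injective _ embTriple_injective,
      Finset.card_image_of_injective _ hFinj, hcard2]
    have h1 := ha1 k
    have h2 := ham k
    have hax : (π₀.filter (fun x => x.2.2 = k)).card = alloc π₀ k := rfl
    have : Ldim φf = φm - φ1 := rfl
    omega
  · -- cardinality
    rw [hπ'', Finset.card_union_of_disjoint hdisj, hrp, hdp,
      Finset.card_image_of_injective _ embTriple_injective,
      Finset.card_image_of_injective _ hFinj, Finset.card_univ]

end Construction

lemma lex_asymm : ∀ {A B : List ℕ}, List.Lex (· < ·) A B → List.Lex (· < ·) B A → False := by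
  intro A B h1
  induction h1 with
  | nil => intro h2; cases h2
  | @rel a l b l' hab =>
    intro h2
    cases h2 with
    | rel h => omega
    | cons h => omega
  | @cons a l l' h ih =>
    intro h2
    cases h2 with
    | rel hr => omega
    | cons h' => exact ih h'

end Helpers

/-- Lemma 5, allocation-level form: the maximum value of the
dummy-augmented instance is `Z_max + |D|`; every maximum feasible allocation of
`P'` assigns all dummy jobs, and its real restriction is a feasible maximum
allocation of `P` whose sorted vector is exactly the max-lexmin fairness
vector `φf`. -/
theorem augmented_maximum_realizes_fairness_vector {J T K : Type*}
    [Fintype J] [Fintype T] [Fintype K] [Nonempty J] [Nonempty T] [Nonempty K]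
    [DecidableEq J] [DecidableEq T] [DecidableEq K]
    (b : J → T → K → Prop) (n : K → T → ℕ)
    (φf : List ℕ) (hφf : ∃ π₀ : Finset (J × T × K),
      MaxLexminFair b n π₀ ∧ sortedVec π₀ = φf) :
    ZmaxAug b n φf = Zmax b n + Fintype.card (Dummy φf) ∧
      ∀ π' : Finset ((J ⊕ Dummy φf) × (T ⊕ Fin (Ldim φf)) × K),
        FeasibleAug b n φf π' → π'.card = ZmaxAug b n φf →
          (∀ d : Dummy φf, ∃ x ∈ π', x.1 = Sum.inr d) ∧
          Feasible b n (restrict π') ∧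
          (restrict π').card = Zmax b n ∧
          sortedVec (restrict π') = φf := by
  classical
  obtain ⟨π₀, ⟨hfeas₀, hcard₀, hfair₀⟩, hsv₀⟩ := hφf
  have hφs : φf.Pairwise (· ≤ ·) := hsv₀ ▸ sortedVec_sorted π₀
  have hamem : ∀ k, alloc π₀ k ∈ φf := fun k => hsv₀ ▸ mem_sortedVec.mpr ⟨k, rfl⟩
  have ha1 : ∀ k, φf.head! ≤ alloc π₀ k := fun k => sorted_head!_le hφs (hamem k)
  have ham : ∀ k, alloc π₀ k ≤ φf.getLast! := fun k => le_sorted_getLast! hφs _ (hamem k)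
  have hφ1m : φf.head! ≤ φf.getLast! := le_trans (ha1 (Classical.arbitrary K)) (ham _)
  have hbdd : BddAbove {z | ∃ π : Finset (J × T × K), Feasible b n π ∧ π.card = z} := by
    refine ⟨Fintype.card (J × T × K), ?_⟩
    rintro z ⟨π, -, rfl⟩
    exact le_trans (Finset.card_le_univ π) (le_of_eq Finset.card_univ)
  have hZle : ∀ π : Finset (J × T × K), Feasible b n π → π.card ≤ Zmax b n :=
    fun π h => le_csSup hbdd ⟨π, h, rfl⟩
  have hsumal : ∀ (f : ℕ → ℕ), (φf.map f).sum = ∑ k, f (alloc π₀ k) :=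
    fun f => hsv₀ ▸ sortedVec_map_sum π₀ f
  have hSUM : ∀ v, φf.head! ≤ v → v ≤ φf.getLast! →
      (φf.map (v - ·)).sum = ∑ l ∈ Finset.range (v - φf.head!), layerSize φf l := by
    intro v h1 h2
    have := sum_tsub_eq_sum_layers φf.head! v h1 φf (fun x hx => sorted_head!_le hφs hx)
    simpa [layerSize] using this
  have hDcard : Fintype.card (Dummy φf) = ∑ l ∈ Finset.range (Ldim φf), layerSize φf l := by
    rw [Fintype.card_sigma]
    simp only [Fintype.card_fin]
    exact Fin.sum_univ_eq_sum_range _ _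
  have hDsum : (φf.map (φf.getLast! - ·)).sum = Fintype.card (Dummy φf) := by
    rw [hSUM φf.getLast! hφ1m le_rfl, hDcard]; rfl
  have hUB : ∀ π' : Finset ((J ⊕ Dummy φf) × (T ⊕ Fin (Ldim φf)) × K),
      FeasibleAug b n φf π' → π'.card ≤ Zmax b n + Fintype.card (Dummy φf) := by
    intro π' hf
    rw [card_split hf.1.1, dummy_count]
    have h1 : (_root_.restrict π').card ≤ Zmax b n := hZle _ (restrict_feasible hf.1)
    have h2 : ∑ d : Dummy φf, (π'.filter (fun x => x.1 = Sum.inr d)).card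
        ≤ Fintype.card (Dummy φf) := by
      calc ∑ d : Dummy φf, (π'.filter (fun x => x.1 = Sum.inr d)).card
          ≤ ∑ _d : Dummy φf, 1 := Finset.sum_le_sum (fun d _ => hf.1.2.1 (Sum.inr d))
        _ = Fintype.card (Dummy φf) := by simp
    omega
  have hAugbdd : BddAbove {z | ∃ π' : Finset ((J ⊕ Dummy φf) × (T ⊕ Fin (Ldim φf)) × K),
      FeasibleAug b n φf π' ∧ π'.card = z} := by
    refine ⟨Zmax b n + Fintype.card (Dummy φf), ?_⟩
    rintro z ⟨π', hfz, rfl⟩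
    exact hUB π' hfz
  obtain ⟨π₁, hf₁, hcard₁⟩ := exists_aug_allocation (b := b) (n := n) hfeas₀ hsv₀
  have hmain : ZmaxAug b n φf = Zmax b n + Fintype.card (Dummy φf) := by
    apply le_antisymm
    · apply csSup_le
      · exact ⟨π₁.card, π₁, hf₁, rfl⟩
      · rintro z ⟨π', hfz, rfl⟩
        exact hUB π' hfz
    · exact le_csSup hAugbdd ⟨π₁, hf₁, by rw [hcard₁, hcard₀]⟩
  refine ⟨hmain, ?_⟩
  intro π' hf hmax
  rw [hmain] at hmax
  have hbids := hf.1.1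
  have hsplit := card_split hbids
  have hRfeas : Feasible b n (_root_.restrict π') := restrict_feasible hf.1
  have hRle : (_root_.restrict π').card ≤ Zmax b n := hZle _ hRfeas
  have hdc := dummy_count (π' := π')
  have hone_le : ∀ d : Dummy φf, (π'.filter (fun x => x.1 = Sum.inr d)).card ≤ 1 :=
    fun d => hf.1.2.1 (Sum.inr d)
  have hdumle : ∑ d : Dummy φf, (π'.filter (fun x => x.1 = Sum.inr d)).card
      ≤ Fintype.card (Dummy φf) := by
    calc ∑ d : Dummy φf, (π'.filter (fun x => x.1 = Sum.inr d)).card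
        ≤ ∑ _d : Dummy φf, 1 := Finset.sum_le_sum (fun d _ => hone_le d)
      _ = Fintype.card (Dummy φf) := by simp
  have hdumsum : ∑ d : Dummy φf, (π'.filter (fun x => x.1 = Sum.inr d)).card
      = Fintype.card (Dummy φf) := by omega
  have hReq : (_root_.restrict π').card = Zmax b n := by omega
  have hone : ∀ d : Dummy φf, (π'.filter (fun x => x.1 = Sum.inr d)).card = 1 := by
    have h1 : ∑ d : Dummy φf, (π'.filter (fun x => x.1 = Sum.inr d)).card
        = ∑ _d : Dummy φf, 1 := by rw [hdumsum]; simp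
    have := (Finset.sum_eq_sum_iff_of_le (fun d (_ : d ∈ Finset.univ) => hone_le d)).mp h1
    exact fun d => this d (Finset.mem_univ d)
  choose td htd using fun d => Finset.card_eq_one.mp (hone d)
  have htd_mem : ∀ d, td d ∈ π' ∧ (td d).1 = Sum.inr d := by
    intro d
    have : td d ∈ π'.filter (fun x => x.1 = Sum.inr d) := by
      rw [htd d]; exact Finset.mem_singleton_self _
    exact Finset.mem_filter.mp this
  have htd_uniq : ∀ d x, x ∈ π' → x.1 = Sum.inr d → x = td d := by
    intro d x hx h1
    have : x ∈ π'.filter (fun x => x.1 = Sum.inr d) := Finset.mem_filter.mpr ⟨hx, h1⟩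
    rw [htd d] at this
    exact Finset.mem_singleton.mp this
  have htd_time : ∀ d, (td d).2.1 = Sum.inr d.1 := by
    intro d
    have hbid := hbids _ (htd_mem d).1
    rw [(htd_mem d).2] at hbid
    cases h : (td d).2.1 with
    | inl t => rw [h] at hbid; exact absurd hbid (by simp [bidAug])
    | inr l =>
      rw [h] at hbid
      simp only [bidAug] at hbid
      rw [hbid]
  set g : Dummy φf → K := fun d => (td d).2.2 with hgdef
  set R := _root_.restrict π' with hRdef
  set r : K → ℕ := fun k => alloc R k with hrdef
  have hdcnt : ∀ k, alloc π' k = r k + (Finset.univ.filter (fun d => g d = k)).card := by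
    intro k
    rw [alloc_split hbids k]
    congr 1
    have heqc : (Finset.univ.filter (fun d : Dummy φf => g d = k)).card
        = (π'.filter (fun x => x.2.2 = k ∧ ¬ (x.1.isLeft : Prop))).card := by
      apply Finset.card_nbij (i := td)
      · intro d hd
        rw [Finset.mem_coe, Finset.mem_filter] at hd ⊢
        exact ⟨(htd_mem d).1, hd.2, by rw [(htd_mem d).2]; simp⟩
      · intro d _ d' _ h
        have h1 := (htd_mem d).2
        have h2 := (htd_mem d').2
        rw [h] at h1
        exact Sum.inr.inj (h1.symm.trans h2)
      · intro x hx
        simp only [Finset.coe_filter, Set.mem_setOf_eq] at hx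
        obtain ⟨hx1, hk, hnl⟩ := hx
        match hj : x.1 with
        | Sum.inl j => exact absurd (by rw [hj]; simp) hnl
        | Sum.inr d =>
          refine ⟨d, ?_, (htd_uniq d x hx1 hj).symm⟩
          simp only [Finset.coe_filter, Set.mem_setOf_eq, Finset.mem_univ, true_and]
          show g d = k
          rw [hgdef]
          show (td d).2.2 = k
          rw [← htd_uniq d x hx1 hj]
          exact hk
    exact heqc.symm
  have hlayer : ∀ (k : K) (l : Fin (Ldim φf)),
      (Finset.univ.filter (fun d : Dummy φf => g d = k ∧ d.1 = l)).card ≤ 1 := by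
    intro k l
    calc (Finset.univ.filter (fun d : Dummy φf => g d = k ∧ d.1 = l)).card
        ≤ (π'.filter (fun x => x.2.1 = Sum.inr l ∧ x.2.2 = k)).card := by
          apply Finset.card_le_card_of_injOn td
          · intro d hd
            rw [Finset.mem_coe, Finset.mem_filter] at hd ⊢
            exact ⟨(htd_mem d).1, by rw [htd_time d, hd.2.2], hd.2.1⟩
          · intro d _ d' _ h
            have h1 := (htd_mem d).2
            have h2 := (htd_mem d').2
            rw [h] at h1
            exact Sum.inr.inj (h1.symm.trans h2)
      _ ≤ 1 := hf.1.2.2 k (Sum.inr l)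
  have hsum_alloc : ∑ k, alloc π' k = Zmax b n + Fintype.card (Dummy φf) := by
    rw [← card_eq_sum_alloc, hmax]
  have hsum_r : ∑ k, r k = Zmax b n := by
    rw [hrdef]
    rw [show (∑ k, alloc R k) = R.card from (card_eq_sum_alloc R).symm]
    exact hReq
  have hsum_g : ∑ k, (Finset.univ.filter (fun d : Dummy φf => g d = k)).card
      = Fintype.card (Dummy φf) := by
    have hh : ∑ k, alloc π' k
        = ∑ k, r k + ∑ k, (Finset.univ.filter (fun d : Dummy φf => g d = k)).card := by
      rw [← Finset.sum_add_distrib]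
      exact Finset.sum_congr rfl (fun k _ => hdcnt k)
    omega
  have hrle : ∀ k, r k ≤ φf.getLast! :=
    fun k => le_trans (hdcnt k ▸ Nat.le_add_right _ _) (hf.2 k)
  have hdkub : ∀ k, (Finset.univ.filter (fun d : Dummy φf => g d = k)).card
      ≤ φf.getLast! - r k := by
    intro k
    have h1 := hf.2 k
    have h2 := hdcnt k
    omega
  have hsum_fmr : ∑ k, (φf.getLast! - r k) = Fintype.card (Dummy φf) := by
    have e2 : ∑ k, ((φf.getLast! - alloc π₀ k) + alloc π₀ k)
        = ∑ k, ((φf.getLast! - r k) + r k) :=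
      Finset.sum_congr rfl (fun k _ => by
        rw [Nat.sub_add_cancel (ham k), Nat.sub_add_cancel (hrle k)])
    rw [Finset.sum_add_distrib, Finset.sum_add_distrib] at e2
    have e3 : ∑ k, (φf.getLast! - alloc π₀ k) = Fintype.card (Dummy φf) := by
      rw [← hDsum, hsumal (fun x => φf.getLast! - x)]
    have e4 : ∑ k, alloc π₀ k = Zmax b n := by rw [← card_eq_sum_alloc, hcard₀]
    omega
  have hdk : ∀ k, (Finset.univ.filter (fun d : Dummy φf => g d = k)).card
      = φf.getLast! - r k := by
    have h1 : ∑ k, (Finset.univ.filter (fun d : Dummy φf => g d = k)).card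
        = ∑ k, (φf.getLast! - r k) := by rw [hsum_g, hsum_fmr]
    have := (Finset.sum_eq_sum_iff_of_le (fun k (_ : k ∈ Finset.univ) => hdkub k)).mp h1
    exact fun k => this k (Finset.mem_univ k)
  have hlcard : ∀ l : Fin (Ldim φf),
      (Finset.univ.filter (fun d : Dummy φf => d.1 = l)).card = layerSize φf l := by
    intro l
    have hcc : (Finset.univ : Finset (Fin (layerSize φf l))).card
        = (Finset.univ.filter (fun d : Dummy φf => d.1 = l)).card := by
      apply Finset.card_nbij (i := fun i => (⟨l, i⟩ : Dummy φf))
      · intro i _; simp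
      · intro i _ i' _ h; simpa using h
      · rintro ⟨l', i⟩ hd
        simp only [Finset.coe_filter, Set.mem_setOf_eq, Finset.mem_univ, true_and] at hd
        subst hd
        exact ⟨i, by simp, rfl⟩
    rw [← hcc, Finset.card_univ, Fintype.card_fin]
  have hkey : ∀ v ∈ φf, ((sortedVec R).map (v - ·)).sum ≤ (φf.map (v - ·)).sum := by
    intro v hv
    have h1v : φf.head! ≤ v := sorted_head!_le hφs hv
    have hmv : v ≤ φf.getLast! := le_sorted_getLast! hφs _ hv
    set c := v - φf.head! with hc
    have hcL : c ≤ Ldim φf := by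
      have : Ldim φf = φf.getLast! - φf.head! := rfl
      omega
    have hLHS : ((sortedVec R).map (v - ·)).sum = ∑ k, (v - r k) := sortedVec_map_sum R _
    have hsplitk : ∀ k : K, ((Finset.univ.filter (fun d : Dummy φf => g d = k)).filter
          (fun d => (d.1 : ℕ) < c)).card
        + ((Finset.univ.filter (fun d : Dummy φf => g d = k)).filter
          (fun d => ¬ ((d.1 : ℕ) < c))).card
        = (Finset.univ.filter (fun d : Dummy φf => g d = k)).card :=
      fun k => Finset.card_filter_add_card_filter_not _
    have hhigh : ∀ k : K, ((Finset.univ.filter (fun d : Dummy φf => g d = k)).filter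
        (fun d => ¬ ((d.1 : ℕ) < c))).card ≤ Ldim φf - c := by
      intro k
      calc ((Finset.univ.filter (fun d : Dummy φf => g d = k)).filter
          (fun d => ¬ ((d.1 : ℕ) < c))).card
          ≤ (Finset.Ico c (Ldim φf)).card := by
            apply Finset.card_le_card_of_injOn (fun d => ((d.1 : ℕ)))
            · intro d hd
              simp only [Finset.mem_coe, Finset.mem_filter, Finset.mem_univ, true_and] at hd
              simp only [Finset.mem_coe, Finset.mem_Ico]
              exact ⟨by omega, d.1.isLt⟩
            · intro d hd d' hd' hdd
              simp only [Finset.coe_filter, Set.mem_setOf_eq, Finset.mem_filter,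
                Finset.mem_univ, true_and] at hd hd'
              have hl : d.1 = d'.1 := Fin.ext hdd
              have hcle := hlayer k d'.1
              rw [Finset.card_le_one] at hcle
              refine hcle d ?_ d' ?_
              · simp only [Finset.mem_filter, Finset.mem_univ, true_and]
                exact ⟨hd.1, hl⟩
              · simp only [Finset.mem_filter, Finset.mem_univ, true_and]
                exact ⟨hd'.1, trivial⟩
        _ = Ldim φf - c := Nat.card_Ico _ _
    have hlowk : ∀ k : K, v - r k ≤ ((Finset.univ.filter (fun d : Dummy φf => g d = k)).filter
        (fun d => (d.1 : ℕ) < c)).card := by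
      intro k
      have h1 := hsplitk k
      have h2 := hhigh k
      have h3 := hdk k
      have h4 := hrle k
      have h5 : Ldim φf = φf.getLast! - φf.head! := rfl
      omega
    have hNlow : ∑ k, ((Finset.univ.filter (fun d : Dummy φf => g d = k)).filter
          (fun d => (d.1 : ℕ) < c)).card
        = (Finset.univ.filter (fun d : Dummy φf => (d.1 : ℕ) < c)).card := by
      rw [Finset.card_eq_sum_card_fiberwise (f := g) (t := Finset.univ)
        (fun x _ => Finset.mem_univ _)]
      exact Finset.sum_congr rfl (fun k _ => by rw [Finset.filter_comm])
    have hNcount : (Finset.univ.filter (fun d : Dummy φf => (d.1 : ℕ) < c)).card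
        = ∑ l ∈ Finset.range c, layerSize φf l := by
      rw [Finset.card_eq_sum_card_fiberwise (f := fun d : Dummy φf => d.1)
        (t := Finset.univ) (fun x _ => Finset.mem_univ _)]
      have hterm : ∀ l : Fin (Ldim φf),
          ((Finset.univ.filter (fun d : Dummy φf => (d.1 : ℕ) < c)).filter
            (fun d => d.1 = l)).card = if (l : ℕ) < c then layerSize φf l else 0 := by
        intro l
        split_ifs with hlc
        · rw [← hlcard l]
          congr 1
          ext d
          simp only [Finset.mem_filter, Finset.mem_univ, true_and]
          constructor
          · exact fun h => h.2
          · exact fun h => ⟨by rw [h]; exact hlc, h⟩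
        · rw [Finset.card_eq_zero, Finset.eq_empty_iff_forall_notMem]
          intro d hd
          simp only [Finset.mem_filter, Finset.mem_univ, true_and] at hd
          exact hlc (hd.2 ▸ hd.1)
      rw [Finset.sum_congr rfl (fun l _ => hterm l)]
      rw [Fin.sum_univ_eq_sum_range (fun l => if l < c then layerSize φf l else 0) (Ldim φf)]
      rw [← Finset.sum_filter]
      congr 1
      ext l
      simp only [Finset.mem_filter, Finset.mem_range]
      omega
    rw [hLHS, hSUM v h1v hmv]
    calc ∑ k, (v - r k)
        ≤ ∑ k, ((Finset.univ.filter (fun d : Dummy φf => g d = k)).filter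
            (fun d => (d.1 : ℕ) < c)).card := Finset.sum_le_sum (fun k _ => hlowk k)
      _ = (Finset.univ.filter (fun d : Dummy φf => (d.1 : ℕ) < c)).card := hNlow
      _ = ∑ l ∈ Finset.range c, layerSize φf l := hNcount
      _ = ∑ l ∈ Finset.range (v - φf.head!), layerSize φf l := by rw [hc]
  have hlen : φf.length = (sortedVec R).length := by
    rw [← hsv₀, sortedVec_length, sortedVec_length]
  have hdall : ∀ d : Dummy φf, ∃ x ∈ π', x.1 = Sum.inr d :=
    fun d => ⟨td d, (htd_mem d).1, (htd_mem d).2⟩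
  rcases lex_of_tsub_sums φf (sortedVec R) hφs hlen hkey with heq | hlex1
  · exact ⟨hdall, hRfeas, hReq, heq.symm⟩
  · have hfair := hfair₀ R hRfeas hReq
    rw [hsv₀] at hfair
    rcases hfair with heq2 | hlex2
    · exact ⟨hdall, hRfeas, hReq, heq2⟩
    · exact absurd hlex2 (fun h2 => lex_asymm hlex1 h2)
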